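/- For n ≥ 2, if fᵏ(x_c) ≠ x_c for all 1 ≤ k ≤ n-1, then (fⁿ)''(x_c) ≠ 0 and sign((fⁿ)''(x_c)) = −ε₁·ε₂···ε_{n-1}, where εₖ = 1 if fᵏ(x_c) < x_c and εₖ = −1 if fᵏ(x_c) > x_c. -/

import Mathlib

open Set Topology

private lemma real_sign_mul' (x y : ℝ) :
    Real.sign (x * y) = Real.sign x * Real.sign y := by
  rcases lt_trichotomy x 0 with hx | hx | hx <;>
    rcases lt_trichotomy y 0 with hy | hy | hy
  · rw [Real.sign_of_pos (mul_pos_of_neg_of_neg hx hy), Real.sign_of_neg hx,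
      Real.sign_of_neg hy]; ring
  · simp [hy, Real.sign_zero]
  · rw [Real.sign_of_neg (mul_neg_of_neg_of_pos hx hy), Real.sign_of_neg hx,
      Real.sign_of_pos hy]; ring
  · simp [hx, Real.sign_zero]
  · simp [hx, Real.sign_zero]
  · simp [hx, Real.sign_zero]
  · rw [Real.sign_of_neg (mul_neg_of_pos_of_neg hx hy), Real.sign_of_pos hx,
      Real.sign_of_neg hy]; ring
  · simp [hy, Real.sign_zero]
  · rw [Real.sign_of_pos (mul_pos hx hy), Real.sign_of_pos hx, Real.sign_of_pos hy]; ring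

private lemma real_sign_prod (s : Finset ℕ) (p : ℕ → ℝ) :
    Real.sign (∏ k ∈ s, p k) = ∏ k ∈ s, Real.sign (p k) := by
  classical
  induction s using Finset.cons_induction with
  | empty => simp [Real.sign_one]
  | cons a s ha ih => rw [Finset.prod_cons, Finset.prod_cons, real_sign_mul', ih]

theorem sign_of_second_derivative_at_crit
    (a b x_c : ℝ) (f : ℝ → ℝ) (hab : a < b)
    (hmap : Set.MapsTo f (Set.Icc a b) (Set.Icc a b))
    (hf : ContDiff ℝ 2 f)
    (hxc : x_c ∈ Set.Ioo a b)
    (h2 : deriv (deriv f) x_c < 0)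
    (hup : ∀ x ∈ Set.Ico a x_c, 0 < deriv f x)
    (hdn : ∀ x ∈ Set.Ioc x_c b, deriv f x < 0)
    (n : ℕ) (hn : 2 ≤ n)
    (hnc : ∀ k : ℕ, 1 ≤ k → k ≤ n - 1 → f^[k] x_c ≠ x_c) :
    deriv (deriv (f^[n])) x_c ≠ 0 ∧
    Real.sign (deriv (deriv (f^[n])) x_c) =
      - ∏ k ∈ Finset.Icc 1 (n - 1),
          (if f^[k] x_c < x_c then (1 : ℝ) else -1) := by
  classical
  have hfd : Differentiable ℝ f := hf.differentiable (by norm_num)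
  have hfd1 : ContDiff ℝ 1 (deriv f) := by
    have := (contDiff_succ_iff_deriv (n := 1)).mp (by exact_mod_cast hf)
    exact this.2.2
  have hdfd : Differentiable ℝ (deriv f) := hfd1.differentiable (by norm_num)
  have hdfc : Continuous (deriv f) := hdfd.continuous
  -- deriv f x_c = 0
  have hderiv0 : deriv f x_c = 0 := by
    have hge : 0 ≤ deriv f x_c := by
      have hne : (𝓝[Set.Ioo a x_c] x_c).NeBot := right_nhdsWithin_Ioo_neBot hxc.1
      have hlim : Filter.Tendsto (deriv f) (𝓝[Set.Ioo a x_c] x_c) (𝓝 (deriv f x_c)) :=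
        (hdfc.continuousAt.continuousWithinAt (s := Set.Ioo a x_c)).tendsto
      refine ge_of_tendsto hlim ?_
      filter_upwards [self_mem_nhdsWithin] with x hx
      exact (hup x ⟨hx.1.le, hx.2⟩).le
    have hle : deriv f x_c ≤ 0 := by
      have hne : (𝓝[Set.Ioo x_c b] x_c).NeBot := left_nhdsWithin_Ioo_neBot hxc.2
      have hlim : Filter.Tendsto (deriv f) (𝓝[Set.Ioo x_c b] x_c) (𝓝 (deriv f x_c)) :=
        (hdfc.continuousAt.continuousWithinAt (s := Set.Ioo x_c b)).tendsto
      refine le_of_tendsto hlim ?_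
      filter_upwards [self_mem_nhdsWithin] with x hx
      exact (hdn x ⟨hx.1, hx.2.le⟩).le
    linarith
  -- first derivative of iterates
  have hiter : ∀ m : ℕ, ∀ x : ℝ,
      HasDerivAt (f^[m]) (∏ k ∈ Finset.range m, deriv f (f^[k] x)) x := by
    intro m
    induction m with
    | zero => intro x; simpa using hasDerivAt_id x
    | succ m ih =>
      intro x
      have h1 : HasDerivAt f (deriv f (f^[m] x)) (f^[m] x) :=
        (hfd (f^[m] x)).hasDerivAt
      have := h1.comp x (ih x)
      rw [Function.iterate_succ']
      rw [Finset.prod_range_succ]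
      convert this using 1
      all_goals first | rfl | ring
  have hderiv_iter : ∀ m : ℕ,
      deriv (f^[m]) = fun x => ∏ k ∈ Finset.range m, deriv f (f^[k] x) := by
    intro m; funext x; exact (hiter m x).deriv
  -- iterates stay in Icc, continuity
  have hmem : ∀ k : ℕ, f^[k] x_c ∈ Set.Icc a b := by
    intro k
    induction k with
    | zero => exact ⟨hxc.1.le, hxc.2.le⟩
    | succ k ih => rw [Function.iterate_succ']; exact hmap ih
  -- second derivative via product rule
  set p : ℕ → ℝ := fun k => deriv f (f^[k] x_c) with hp
  have hp0 : p 0 = 0 := by simp [hp, hderiv0]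
  have hprod : HasDerivAt (deriv (f^[n]))
      (∑ k ∈ Finset.range n, (∏ j ∈ (Finset.range n).erase k, p j) •
        (deriv (deriv f) (f^[k] x_c) * ∏ j ∈ Finset.range k, p j)) x_c := by
    rw [hderiv_iter n]
    exact HasDerivAt.fun_finsetProd (fun k _ => by
      exact ((hdfd (f^[k] x_c)).hasDerivAt.comp x_c (hiter k x_c)))
  have hsum : deriv (deriv (f^[n])) x_c =
      (∏ j ∈ (Finset.range n).erase 0, p j) * deriv (deriv f) x_c := by
    rw [hprod.deriv]
    rw [Finset.sum_eq_single 0]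
    · simp
    · intro k hk hk0
      have : (0 : ℕ) ∈ Finset.range k := Finset.mem_range.mpr (Nat.pos_of_ne_zero hk0)
      rw [Finset.prod_eq_zero this hp0]
      simp
    · intro h; simp at h; omega
  have herase : (Finset.range n).erase 0 = Finset.Icc 1 (n - 1) := by
    ext j
    simp only [Finset.mem_erase, Finset.mem_range, Finset.mem_Icc]
    omega
  rw [herase] at hsum
  -- signs of factors
  have hsigns : ∀ k ∈ Finset.Icc 1 (n - 1),
      Real.sign (p k) = (if f^[k] x_c < x_c then (1 : ℝ) else -1) ∧ p k ≠ 0 := by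
    intro k hk
    rw [Finset.mem_Icc] at hk
    have hne := hnc k hk.1 hk.2
    have hm := hmem k
    by_cases hlt : f^[k] x_c < x_c
    · have hpos : 0 < p k := hup _ ⟨hm.1, hlt⟩
      rw [if_pos hlt, Real.sign_of_pos hpos]
      exact ⟨rfl, ne_of_gt hpos⟩
    · have hgt : x_c < f^[k] x_c := lt_of_le_of_ne (not_lt.mp hlt) (Ne.symm hne)
      have hneg : p k < 0 := hdn _ ⟨hgt, hm.2⟩
      rw [if_neg hlt, Real.sign_of_neg hneg]
      exact ⟨rfl, ne_of_lt hneg⟩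
  have hPne : (∏ j ∈ Finset.Icc 1 (n - 1), p j) ≠ 0 :=
    Finset.prod_ne_zero_iff.mpr fun k hk => (hsigns k hk).2
  constructor
  · rw [hsum]
    exact mul_ne_zero hPne (ne_of_lt h2)
  · rw [hsum, real_sign_mul', real_sign_prod, Real.sign_of_neg h2]
    rw [Finset.prod_congr rfl (fun k hk => (hsigns k hk).1)]
    ring
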